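/- Let Λ > 1 and let c₀(Λ) ∈ (0,1) be the unique positive solution of c = tanh(Λc). Then for every ζ > 1 the equation ζ = c·(1 − c·tanh(Λc))/(c − tanh(Λc)) has a unique solution c in the interval (c₀(Λ), 1). -/

import Mathlib

open Real Set

lemma tanh_exp (x : ℝ) : Real.tanh x = 1 - 2 * (Real.exp (2*x) + 1)⁻¹ := by
  have h1 : Real.exp x * Real.exp (-x) = 1 := by rw [← Real.exp_add]; simp
  have h2 : Real.exp x * Real.exp x = Real.exp (2*x) := by rw [← Real.exp_add]; ring_nf
  have hc : Real.cosh x > 0 := Real.cosh_pos x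
  have he : Real.exp (2*x) + 1 > 0 := by positivity
  rw [Real.tanh_eq_sinh_div_cosh, Real.sinh_eq, Real.cosh_eq] at *
  field_simp
  have h3 : Real.exp (x*2) = Real.exp x * Real.exp x := by rw [← Real.exp_add]; ring_nf
  linear_combination (-2*Real.exp x) * h1 + (-2*Real.exp (-x)) * h3

lemma continuous_tanh' : Continuous Real.tanh := by
  have : Real.tanh = fun x : ℝ => 1 - 2 * (Real.exp (2*x) + 1)⁻¹ := funext tanh_exp
  rw [this]
  apply Continuous.sub continuous_const
  apply Continuous.mul continuous_const
  apply Continuous.inv₀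
  · fun_prop
  · intro x; positivity

lemma tanh_strictConcave (Λ : ℝ) (hΛ : 0 < Λ) :
    StrictConcaveOn ℝ (Set.Ici (0:ℝ)) (fun c => Real.tanh (Λ * c)) := by
  have hfg : (fun c => Real.tanh (Λ * c)) =
      (fun c : ℝ => 1 - 2 * (Real.exp (2*(Λ*c)) + 1)⁻¹) := by
    funext c; exact tanh_exp _
  rw [hfg]
  set g : ℝ → ℝ := fun c => 1 - 2 * (Real.exp (2*(Λ*c)) + 1)⁻¹ with hg
  set G : ℝ → ℝ := fun c => 4*Λ*Real.exp (2*Λ*c) / (Real.exp (2*Λ*c)+1)^2 with hGdef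
  have hE : ∀ c : ℝ, HasDerivAt (fun c : ℝ => Real.exp (2*Λ*c)) (Real.exp (2*Λ*c) * (2*Λ)) c := by
    intro c
    have h0 : HasDerivAt (fun c : ℝ => 2*Λ*c) (2*Λ) c := by
      simpa using (hasDerivAt_id c).const_mul (2*Λ)
    exact h0.exp
  have hne : ∀ c : ℝ, Real.exp (2*Λ*c) + 1 ≠ 0 := by
    intro c; positivity
  have hG : ∀ c : ℝ, HasDerivAt g (G c) c := by
    intro c
    have h1 : HasDerivAt (fun c : ℝ => Real.exp (2*Λ*c) + 1) (Real.exp (2*Λ*c) * (2*Λ)) c :=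
      (hE c).add_const 1
    have h2 := ((h1.inv (hne c)).const_mul 2).const_sub 1
    have h3 : (fun c : ℝ => 1 - 2 * (Real.exp (2*Λ*c) + 1)⁻¹) = g := by
      funext x; simp [hg]; ring_nf
    simp only [Pi.inv_apply] at h2
    rw [h3] at h2
    refine h2.congr_deriv ?_
    have := hne c
    simp only [hGdef]
    field_simp
    ring
  have hderiv : deriv g = G := funext fun c => (hG c).deriv
  apply strictConcaveOn_of_deriv2_neg (convex_Ici 0)
  · apply Continuous.continuousOn
    apply Continuous.sub continuous_const
    apply Continuous.mul continuous_const
    apply Continuous.inv₀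
    · continuity
    · intro x; positivity
  · intro x hx
    rw [interior_Ici] at hx
    have hx0 : (0:ℝ) < x := hx
    show deriv (deriv g) x < 0
    rw [hderiv]
    set E := Real.exp (2*Λ*x) with hE2
    have hE1 : 1 < E := by
      calc (1:ℝ) = Real.exp 0 := Real.exp_zero.symm
        _ < E := Real.exp_lt_exp.mpr (by positivity)
    have hGd : HasDerivAt G
        ((4*Λ*(E*(2*Λ)) * (E+1)^2 - 4*Λ*E * (2*(E+1)^1 * (E*(2*Λ)))) / ((E+1)^2)^2) x := by
      have hnum : HasDerivAt (fun c : ℝ => 4*Λ*Real.exp (2*Λ*c)) (4*Λ*(E*(2*Λ))) x :=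
        (hE x).const_mul (4*Λ)
      have hden : HasDerivAt (fun c : ℝ => (Real.exp (2*Λ*c)+1)^2) (2*(E+1)^1 * (E*(2*Λ))) x :=
        ((hE x).add_const 1).pow 2
      exact hnum.div hden (by positivity)
    rw [hGd.deriv]
    have hEpos : 0 < E := by positivity
    have h4 : 0 < (E+1)^4 := by positivity
    rw [div_neg_iff]
    right
    constructor
    · have key : 4*Λ*(E*(2*Λ)) * (E+1)^2 - 4*Λ*E * (2*(E+1)^1 * (E*(2*Λ)))
          = 8*Λ^2*E*((E+1)*(1-E)) := by ring
      rw [key]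
      apply mul_neg_of_pos_of_neg (by positivity)
      apply mul_neg_of_pos_of_neg (by positivity)
      linarith
    · positivity

lemma q_strictConvex (ζ c₀ : ℝ) (hζ : 1 < ζ) (hc0 : 0 < c₀) (hc1 : c₀ < 1) :
    StrictConvexOn ℝ (Set.Icc c₀ 1) (fun c => (ζ-1)*c/(ζ-c^2)) := by
  set q : ℝ → ℝ := fun c => (ζ-1)*c/(ζ-c^2) with hq
  set Q : ℝ → ℝ := fun c => (ζ-1)*(ζ+c^2)/(ζ-c^2)^2 with hQ
  have hne : ∀ x : ℝ, x ∈ Set.Ioo (-1:ℝ) 1 → ζ - x^2 ≠ 0 := by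
    intro x hx
    have : x^2 < 1 := by nlinarith [hx.1, hx.2]
    nlinarith
  have hden : ∀ x : ℝ, HasDerivAt (fun c : ℝ => ζ - c^2) (-(2*x)) x := by
    intro x
    simpa using ((hasDerivAt_pow 2 x).const_sub ζ)
  have hqd : ∀ x ∈ Set.Ioo (-1:ℝ) 1, HasDerivAt q (Q x) x := by
    intro x hx
    have hnum : HasDerivAt (fun c : ℝ => (ζ-1)*c) (ζ-1) x := by
      simpa using (hasDerivAt_id x).const_mul (ζ-1)
    have h := hnum.div (hden x) (hne x hx)
    refine HasDerivAt.congr_deriv (f := q) h ?_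
    have h2 := hne x hx
    simp only [hQ]
    field_simp
    ring
  have hderiv : ∀ x ∈ Set.Ioo (-1:ℝ) 1, deriv q x = Q x := fun x hx => (hqd x hx).deriv
  apply strictConvexOn_of_deriv2_pos (convex_Icc c₀ 1)
  · apply ContinuousOn.div (Continuous.continuousOn (by fun_prop)) (Continuous.continuousOn (by fun_prop))
    intro x hx
    have : x^2 ≤ 1 := by nlinarith [hx.1, hx.2, hc0]
    nlinarith
  · intro x hx
    rw [interior_Icc] at hx
    have hx1 : x ∈ Set.Ioo (-1:ℝ) 1 := ⟨by linarith [hx.1, hc0], hx.2⟩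
    have hx0 : 0 < x := lt_trans hc0 hx.1
    have hD : 0 < ζ - x^2 := by nlinarith [hx1.1, hx1.2]
    show 0 < deriv (deriv q) x
    have hev : deriv q =ᶠ[nhds x] Q :=
      Filter.eventuallyEq_of_mem (isOpen_Ioo.mem_nhds hx1) hderiv
    rw [hev.deriv_eq]
    have hn : HasDerivAt (fun c : ℝ => (ζ-1)*(ζ+c^2)) ((ζ-1)*(2*x^1)) x := by
      have := (hasDerivAt_pow 2 x).const_add ζ
      simpa using this.const_mul (ζ-1)
    have hd : HasDerivAt (fun c : ℝ => (ζ-c^2)^2) (2*(ζ-x^2)^1*(-(2*x))) x :=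
      (hden x).pow 2
    have hQd := hn.div hd (by positivity)
    rw [show deriv Q x = _ from hQd.deriv]
    apply div_pos
    · have key : (ζ-1)*(2*x^1) * (ζ-x^2)^2 - (ζ-1)*(ζ+x^2) * (2*(ζ-x^2)^1*(-(2*x)))
          = 2*x*((ζ-1)*((ζ-x^2)*(3*ζ+x^2))) := by ring
      rw [key]
      apply mul_pos (by linarith)
      apply mul_pos (by linarith)
      apply mul_pos hD (by nlinarith)
    · positivity

theorem transcendental_eq_unique_sol_large_lambda (Λ : ℝ) (hΛ : 1 < Λ)
    (c₀ : ℝ) (hc₀ : c₀ ∈ Set.Ioo (0:ℝ) 1) (hfix : c₀ = Real.tanh (Λ * c₀))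
    (ζ : ℝ) (hζ : 1 < ζ) :
    ∃! c : ℝ, c ∈ Set.Ioo c₀ 1 ∧
      ζ = c * (1 - c * Real.tanh (Λ * c)) / (c - Real.tanh (Λ * c)) := by
  obtain ⟨hc0pos, hc0lt1⟩ := hc₀
  have hΛ0 : (0:ℝ) < Λ := by linarith
  set h : ℝ → ℝ := fun c => Real.tanh (Λ*c) - (ζ-1)*c/(ζ-c^2) with hh
  -- concavity of h on [c₀, 1]
  have hsub : Set.Icc c₀ 1 ⊆ Set.Ici (0:ℝ) := fun x hx => le_trans hc0pos.le hx.1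
  have hconc : StrictConcaveOn ℝ (Set.Icc c₀ 1) h :=
    ((tanh_strictConcave Λ hΛ0).subset hsub (convex_Icc _ _)).sub
      (q_strictConvex ζ c₀ hζ hc0pos hc0lt1)
  -- tanh (Λ c) < c for c ∈ (c₀, 1]
  have htanh_lt : ∀ c, c₀ < c → c ≤ 1 → Real.tanh (Λ*c) < c := by
    intro c hcc hc1
    have hcpos : 0 < c := lt_trans hc0pos hcc
    have hsc := tanh_strictConcave Λ hΛ0
    have ha : 0 < 1 - c₀/c := by
      rw [sub_pos, div_lt_one hcpos]; exact hcc
    have hb : 0 < c₀/c := by positivity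
    have hab : (1 - c₀/c) + c₀/c = 1 := by ring
    have key := hsc.2 (Set.self_mem_Ici) (Set.mem_Ici.mpr hcpos.le) hcpos.ne ha hb hab
    simp only [smul_eq_mul, mul_zero, Real.tanh_zero] at key
    have hpt : (0:ℝ) + c₀/c*c = c₀ := by field_simp; ring
    rw [hpt] at key
    -- key : (1 - c₀/c) * 0 + c₀/c * tanh (Λ*c) < tanh (Λ*c₀) = c₀
    rw [← hfix] at key
    have key2 : c₀ * Real.tanh (Λ*c) / c < c₀ := by
      calc c₀ * Real.tanh (Λ*c) / c = (0:ℝ) + c₀/c * Real.tanh (Λ*c) := by ring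
        _ < c₀ := key
    rw [div_lt_iff₀ hcpos] at key2
    exact lt_of_mul_lt_mul_left (by linarith) hc0pos.le
  -- positivity of ζ - c²
  have hDpos : ∀ c : ℝ, -1 ≤ c → c ≤ 1 → 0 < ζ - c^2 := by
    intro c hc1 hc2; nlinarith
  -- sign of h at the endpoints
  have hhc₀ : 0 < h c₀ := by
    have hD0 : 0 < ζ - c₀^2 := hDpos c₀ (by linarith) hc0lt1.le
    simp only [hh, ← hfix]
    rw [sub_pos, div_lt_iff₀ hD0]
    nlinarith
  have hh1 : h 1 < 0 := by
    have htl : Real.tanh (Λ*1) < 1 := by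
      rw [tanh_exp]
      have : 0 < 2 * (Real.exp (2*(Λ*1)) + 1)⁻¹ := by positivity
      linarith
    have : (ζ-1)*1/(ζ-1^2) = 1 := by
      rw [one_pow, mul_one]; exact div_self (by linarith)
    simp only [hh, this]
    linarith
  -- continuity of h on [c₀, 1]
  have hcont : ContinuousOn h (Set.Icc c₀ 1) := by
    apply ContinuousOn.sub
    · exact (continuous_tanh'.comp (continuous_const.mul continuous_id)).continuousOn
    · apply ContinuousOn.div (Continuous.continuousOn (by fun_prop))
        (Continuous.continuousOn (by fun_prop))
      intro x hx
      exact (hDpos x (by linarith [hx.1]) hx.2).ne'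
  -- existence of a root via IVT
  obtain ⟨c, hcmem, hch⟩ := intermediate_value_Ioo' hc0lt1.le hcont ⟨hh1, hhc₀⟩
  -- equivalence between the equation and h = 0
  have hiff : ∀ x ∈ Set.Ioo c₀ 1,
      (ζ = x * (1 - x * Real.tanh (Λ * x)) / (x - Real.tanh (Λ * x)) ↔ h x = 0) := by
    intro x hx
    have ht := htanh_lt x hx.1 hx.2.le
    have hd : 0 < x - Real.tanh (Λ*x) := by linarith
    have hD : 0 < ζ - x^2 := hDpos x (by linarith [hx.1]) hx.2.le
    constructor
    · intro he
      rw [eq_div_iff hd.ne'] at he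
      simp only [hh]
      rw [sub_eq_zero, eq_div_iff hD.ne']
      linear_combination (-1) * he
    · intro he
      simp only [hh] at he
      rw [sub_eq_zero, eq_div_iff hD.ne'] at he
      rw [eq_div_iff hd.ne']
      linear_combination (-1) * he
  -- no two distinct roots
  have key : ∀ z₁ z₂ : ℝ, z₁ ∈ Set.Ioo c₀ 1 → z₂ ∈ Set.Ioo c₀ 1 → h z₁ = 0 → h z₂ = 0 →
      z₁ < z₂ → False := by
    intro z₁ z₂ h1 h2 e1 e2 hlt
    have hcon := hconc.concaveOn
    have hz2c : 0 < z₂ - c₀ := by linarith [h2.1]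
    have ha : 0 < (z₂ - z₁)/(z₂ - c₀) := div_pos (by linarith) hz2c
    have hb : 0 < (z₁ - c₀)/(z₂ - c₀) := div_pos (by linarith [h1.1]) hz2c
    have hab : (z₂ - z₁)/(z₂ - c₀) + (z₁ - c₀)/(z₂ - c₀) = 1 := by field_simp; ring
    have hle := hcon.2 (Set.left_mem_Icc.mpr hc0lt1.le) (Set.mem_Icc.mpr ⟨h2.1.le, h2.2.le⟩)
      ha.le hb.le hab
    simp only [smul_eq_mul] at hle
    have hpt : (z₂ - z₁)/(z₂ - c₀) * c₀ + (z₁ - c₀)/(z₂ - c₀) * z₂ = z₁ := by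
      field_simp; ring
    rw [hpt, e1, e2] at hle
    nlinarith [mul_pos ha hhc₀]
  refine ⟨c, ⟨hcmem, (hiff c hcmem).mpr hch⟩, ?_⟩
  rintro y ⟨hy, hyeq⟩
  have hyroot := (hiff y hy).mp hyeq
  rcases lt_trichotomy y c with hlt | heq | hgt
  · exact absurd (key y c hy hcmem hyroot hch hlt) not_false
  · exact heq
  · exact absurd (key c y hcmem hy hch hyroot hgt) not_false
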